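/- Let d ≥ 2 be an integer, p ∈ (0,1) and μ_2 ∈ ℝ, and let D(p, μ_2) be the convex set of pmfs q on {0,…,d} satisfying Σ_{j=0}^d j·q(j) = pd and Σ_{j=0}^d j²·q(j) = pd + d(d−1)·μ_2. Then every extreme point of D(p, μ_2) has support on at most three points, i.e. at most three of its values q(0),…,q(d) are nonzero. -/

import Mathlib

open Finset

private lemma vand0 (A B C E : ℝ) (hAB : A - B ≠ 0) (hAC : A - C ≠ 0) (hAE : A - E ≠ 0)
    (hBC : B - C ≠ 0) (hBE : B - E ≠ 0) (hCE : C - E ≠ 0) :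
    ((A-B)*(A-C)*(A-E))⁻¹ + ((B-A)*(B-C)*(B-E))⁻¹ + ((C-A)*(C-B)*(C-E))⁻¹
      + ((E-A)*(E-B)*(E-C))⁻¹ = 0 := by
  have hBA : B - A ≠ 0 := by intro h; exact hAB (by rw [sub_eq_zero] at h ⊢; exact h.symm)
  have hCA : C - A ≠ 0 := by intro h; exact hAC (by rw [sub_eq_zero] at h ⊢; exact h.symm)
  have hCB : C - B ≠ 0 := by intro h; exact hBC (by rw [sub_eq_zero] at h ⊢; exact h.symm)
  have hEA : E - A ≠ 0 := by intro h; exact hAE (by rw [sub_eq_zero] at h ⊢; exact h.symm)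
  have hEB : E - B ≠ 0 := by intro h; exact hBE (by rw [sub_eq_zero] at h ⊢; exact h.symm)
  have hEC : E - C ≠ 0 := by intro h; exact hCE (by rw [sub_eq_zero] at h ⊢; exact h.symm)
  field_simp
  ring

private lemma vand1 (A B C E : ℝ) (hAB : A - B ≠ 0) (hAC : A - C ≠ 0) (hAE : A - E ≠ 0)
    (hBC : B - C ≠ 0) (hBE : B - E ≠ 0) (hCE : C - E ≠ 0) :
    A * ((A-B)*(A-C)*(A-E))⁻¹ + B * ((B-A)*(B-C)*(B-E))⁻¹ + C * ((C-A)*(C-B)*(C-E))⁻¹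
      + E * ((E-A)*(E-B)*(E-C))⁻¹ = 0 := by
  have hBA : B - A ≠ 0 := by intro h; exact hAB (by rw [sub_eq_zero] at h ⊢; exact h.symm)
  have hCA : C - A ≠ 0 := by intro h; exact hAC (by rw [sub_eq_zero] at h ⊢; exact h.symm)
  have hCB : C - B ≠ 0 := by intro h; exact hBC (by rw [sub_eq_zero] at h ⊢; exact h.symm)
  have hEA : E - A ≠ 0 := by intro h; exact hAE (by rw [sub_eq_zero] at h ⊢; exact h.symm)
  have hEB : E - B ≠ 0 := by intro h; exact hBE (by rw [sub_eq_zero] at h ⊢; exact h.symm)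
  have hEC : E - C ≠ 0 := by intro h; exact hCE (by rw [sub_eq_zero] at h ⊢; exact h.symm)
  field_simp
  ring

private lemma vand2 (A B C E : ℝ) (hAB : A - B ≠ 0) (hAC : A - C ≠ 0) (hAE : A - E ≠ 0)
    (hBC : B - C ≠ 0) (hBE : B - E ≠ 0) (hCE : C - E ≠ 0) :
    A^2 * ((A-B)*(A-C)*(A-E))⁻¹ + B^2 * ((B-A)*(B-C)*(B-E))⁻¹ + C^2 * ((C-A)*(C-B)*(C-E))⁻¹
      + E^2 * ((E-A)*(E-B)*(E-C))⁻¹ = 0 := by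
  have hBA : B - A ≠ 0 := by intro h; exact hAB (by rw [sub_eq_zero] at h ⊢; exact h.symm)
  have hCA : C - A ≠ 0 := by intro h; exact hAC (by rw [sub_eq_zero] at h ⊢; exact h.symm)
  have hCB : C - B ≠ 0 := by intro h; exact hBC (by rw [sub_eq_zero] at h ⊢; exact h.symm)
  have hEA : E - A ≠ 0 := by intro h; exact hAE (by rw [sub_eq_zero] at h ⊢; exact h.symm)
  have hEB : E - B ≠ 0 := by intro h; exact hBE (by rw [sub_eq_zero] at h ⊢; exact h.symm)
  have hEC : E - C ≠ 0 := by intro h; exact hCE (by rw [sub_eq_zero] at h ⊢; exact h.symm)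
  field_simp
  ring

/-- Every extreme point of the convex set of pmfs on `{0,…,d}` with mean `pd`
and second moment `pd + d(d−1)μ₂` has at most three nonzero values. -/
theorem stmt_10 (d : ℕ) (hd : 2 ≤ d) (p : ℝ) (hp : p ∈ Set.Ioo (0 : ℝ) 1) (μ2 : ℝ)
    (D : Set (Fin (d + 1) → ℝ))
    (hD : D = {q : Fin (d + 1) → ℝ |
      (∀ j, 0 ≤ q j) ∧ (∑ j, q j = 1) ∧
      (∑ j, (j.val : ℝ) * q j = p * d) ∧
      (∑ j, (j.val : ℝ) ^ 2 * q j = p * d + (d : ℝ) * ((d : ℝ) - 1) * μ2)})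
    (q : Fin (d + 1) → ℝ) (hq : q ∈ Set.extremePoints ℝ D) :
    (Finset.univ.filter (fun j => q j ≠ 0)).card ≤ 3 := by
  by_contra hcard
  push_neg at hcard
  set S := Finset.univ.filter (fun j => q j ≠ 0) with hS
  have hqD := hq.1
  rw [hD] at hqD
  obtain ⟨hpos, hsum, hm1, hm2⟩ := hqD
  -- extract four distinct elements of the support
  obtain ⟨t, hts, ht4⟩ := Finset.exists_subset_card_eq (s := S) (n := 4) (by omega)
  obtain ⟨a, ha⟩ : t.Nonempty := Finset.card_pos.mp (by omega)
  have herase : (t.erase a).card = 3 := by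
    rw [Finset.card_erase_of_mem ha, ht4]
  obtain ⟨b, c, e, hbc, hbe, hce, htabc⟩ := Finset.card_eq_three.mp herase
  have hb : b ∈ t.erase a := by rw [htabc]; simp
  have hc : c ∈ t.erase a := by rw [htabc]; simp
  have he : e ∈ t.erase a := by rw [htabc]; simp
  have hab : a ≠ b := fun h => (Finset.mem_erase.mp hb).1 h.symm
  have hac : a ≠ c := fun h => (Finset.mem_erase.mp hc).1 h.symm
  have hae : a ≠ e := fun h => (Finset.mem_erase.mp he).1 h.symm
  have hbt : b ∈ t := (Finset.mem_erase.mp hb).2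
  have hct : c ∈ t := (Finset.mem_erase.mp hc).2
  have het : e ∈ t := (Finset.mem_erase.mp he).2
  -- positivity of q on the four points
  have hqpos : ∀ j ∈ t, 0 < q j := by
    intro j hj
    have : j ∈ S := hts hj
    rw [hS, Finset.mem_filter] at this
    exact lt_of_le_of_ne (hpos j) (Ne.symm this.2)
  have hqa := hqpos a ha
  have hqb := hqpos b hbt
  have hqc := hqpos c hct
  have hqe := hqpos e het
  -- real node values
  set A : ℝ := (a.val : ℝ) with hA
  set B : ℝ := (b.val : ℝ) with hB
  set C : ℝ := (c.val : ℝ) with hCdef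
  set E : ℝ := (e.val : ℝ) with hE
  have cast_ne : ∀ x y : Fin (d+1), x ≠ y → (x.val : ℝ) - (y.val : ℝ) ≠ 0 := by
    intro x y hxy h
    apply hxy
    have : (x.val : ℝ) = (y.val : ℝ) := by linarith
    exact Fin.ext (Nat.cast_injective this)
  have hAB := cast_ne a b hab
  have hAC := cast_ne a c hac
  have hAE := cast_ne a e hae
  have hBC := cast_ne b c hbc
  have hBE := cast_ne b e hbe
  have hCE := cast_ne c e hce
  -- the perturbation coefficients
  set va : ℝ := ((A-B)*(A-C)*(A-E))⁻¹ with hva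
  set vb : ℝ := ((B-A)*(B-C)*(B-E))⁻¹ with hvb
  set vc : ℝ := ((C-A)*(C-B)*(C-E))⁻¹ with hvc
  set ve : ℝ := ((E-A)*(E-B)*(E-C))⁻¹ with hve
  have hva0 : va ≠ 0 := by
    rw [hva]
    exact inv_ne_zero (mul_ne_zero (mul_ne_zero hAB hAC) hAE)
  set w : Fin (d+1) → ℝ := fun j =>
    (if j = a then va else 0) + (if j = b then vb else 0)
    + (if j = c then vc else 0) + (if j = e then ve else 0) with hw
  -- generic sum of f against w
  have hsumw : ∀ f : Fin (d+1) → ℝ,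
      ∑ j, f j * w j = f a * va + f b * vb + f c * vc + f e * ve := by
    intro f
    rw [hw]
    simp only [mul_add, mul_ite, mul_zero]
    rw [Finset.sum_add_distrib, Finset.sum_add_distrib, Finset.sum_add_distrib]
    simp [Finset.sum_ite_eq']
  have hw0 : ∑ j, w j = 0 := by
    have h := hsumw (fun _ => 1)
    simp only [one_mul] at h
    rw [h]
    exact vand0 A B C E hAB hAC hAE hBC hBE hCE
  have hw1 : ∑ j, (j.val : ℝ) * w j = 0 := by
    rw [hsumw (fun j => (j.val : ℝ))]
    exact vand1 A B C E hAB hAC hAE hBC hBE hCE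
  have hw2 : ∑ j, (j.val : ℝ)^2 * w j = 0 := by
    rw [hsumw (fun j => (j.val : ℝ)^2)]
    exact vand2 A B C E hAB hAC hAE hBC hBE hCE
  -- small epsilon
  set m : ℝ := min (min (q a / (|va|+1)) (q b / (|vb|+1)))
      (min (q c / (|vc|+1)) (q e / (|ve|+1))) with hm
  have hm0 : 0 < m := by
    rw [hm]
    apply lt_min <;> apply lt_min <;> positivity
  -- pointwise bound : m * |w j| ≤ q j
  have key : ∀ (x : Fin (d+1)) (v : ℝ), w x = v → m ≤ q x / (|v|+1) →
      m * |w x| ≤ q x := by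
    intro x v hwv hmle
    rw [hwv]
    have h1 : m * |v| ≤ (q x / (|v|+1)) * |v| :=
      mul_le_mul_of_nonneg_right hmle (abs_nonneg v)
    have h2 : (q x / (|v|+1)) * |v| ≤ q x := by
      rw [div_mul_eq_mul_div, div_le_iff₀ (by positivity)]
      have hx0 : 0 ≤ q x := hpos x
      nlinarith [abs_nonneg v]
    linarith
  have hbound : ∀ j, m * |w j| ≤ q j := by
    intro j
    by_cases hja : j = a
    · rw [hja]
      exact key a va (by simp [hw, hab, hac, hae]) (le_trans (min_le_left _ _) (min_le_left _ _))
    by_cases hjb : j = b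
    · rw [hjb]
      exact key b vb (by simp [hw, hab.symm, hbc, hbe]) (le_trans (min_le_left _ _) (min_le_right _ _))
    by_cases hjc : j = c
    · rw [hjc]
      exact key c vc (by simp [hw, hac.symm, hbc.symm, hce]) (le_trans (min_le_right _ _) (min_le_left _ _))
    by_cases hje : j = e
    · rw [hje]
      exact key e ve (by simp [hw, hae.symm, hbe.symm, hce.symm]) (le_trans (min_le_right _ _) (min_le_right _ _))
    · have hwj : w j = 0 := by simp [hw, hja, hjb, hjc, hje]
      rw [hwj]
      simpa using hpos j
  -- membership of the two perturbed points
  have hmemD : ∀ (s : ℝ), |s| = 1 → (q + (s * m) • w) ∈ D := by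
    intro s hs
    rw [hD]
    refine ⟨?_, ?_, ?_, ?_⟩
    · intro j
      simp only [Pi.add_apply, Pi.smul_apply, smul_eq_mul]
      have h1 : s * m * w j ≤ |s * m * w j| := le_abs_self _
      have h2 : -(|s * m * w j|) ≤ s * m * w j := neg_abs_le _
      have h3 : |s * m * w j| = m * |w j| := by
        rw [abs_mul, abs_mul, hs, one_mul, abs_of_pos hm0]
      have h4 := hbound j
      linarith
    · simp only [Pi.add_apply, Pi.smul_apply, smul_eq_mul]
      rw [Finset.sum_add_distrib, ← Finset.mul_sum, hw0, hsum]
      ring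
    · simp only [Pi.add_apply, Pi.smul_apply, smul_eq_mul]
      have hc1 : ∀ j : Fin (d+1), (j.val:ℝ) * (q j + s * m * w j)
          = (j.val:ℝ) * q j + (s * m) * ((j.val:ℝ) * w j) := fun j => by ring
      rw [Finset.sum_congr rfl (fun j _ => hc1 j), Finset.sum_add_distrib,
        ← Finset.mul_sum, hw1, hm1]
      ring
    · simp only [Pi.add_apply, Pi.smul_apply, smul_eq_mul]
      have hc2 : ∀ j : Fin (d+1), (j.val:ℝ)^2 * (q j + s * m * w j)
          = (j.val:ℝ)^2 * q j + (s * m) * ((j.val:ℝ)^2 * w j) := fun j => by ring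
      rw [Finset.sum_congr rfl (fun j _ => hc2 j), Finset.sum_add_distrib,
        ← Finset.mul_sum, hw2, hm2]
      ring
  set q1 : Fin (d+1) → ℝ := q + m • w with hq1def
  set q2 : Fin (d+1) → ℝ := q - m • w with hq2def
  have hq1D : q1 ∈ D := by
    have h := hmemD 1 (by norm_num)
    rw [one_mul] at h
    rwa [hq1def]
  have hq2D : q2 ∈ D := by
    have h := hmemD (-1) (by norm_num)
    have heq : q + ((-1 : ℝ) * m) • w = q2 := by
      rw [hq2def]
      funext j
      simp only [Pi.add_apply, Pi.sub_apply, Pi.smul_apply, smul_eq_mul]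
      ring
    rwa [heq] at h
  have hseg : q ∈ openSegment ℝ q1 q2 := by
    refine ⟨1/2, 1/2, by norm_num, by norm_num, by norm_num, ?_⟩
    rw [hq1def, hq2def]
    funext j
    simp only [Pi.add_apply, Pi.sub_apply, Pi.smul_apply, smul_eq_mul]
    ring
  have heq1 := (hq.2 hq1D hq2D hseg)
  -- contradiction : w a = va ≠ 0
  have hwa : w a = va := by simp [hw, hab, hac, hae]
  have happ : q a + m * w a = q a := by
    conv_rhs => rw [← heq1]
    rw [hq1def]
    simp only [Pi.add_apply, Pi.smul_apply, smul_eq_mul]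
  rw [hwa] at happ
  have hmva : m * va = 0 := by linarith
  exact (mul_ne_zero (ne_of_gt hm0) hva0) hmva
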